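/- For every audit policy φ, ∑_{i=1}^{n} ∑_{a' suspicious} h(a') · E_{A_{−i} ~ h^{n−1}}[ φ_i(A_{−i} ∪_i {a'}) ] ≤ E_{A ~ h^{n}}[ min(B, |G(A)|) ], and this inequality holds with equality when φ is the UNIFORM policy. -/

import Mathlib

/-!
Threshold allocation model: `n` agents with types in `X × Z` (`X` verifiable,
`Z` self-reported), types drawn i.i.d. from a pmf `h`, score `f`, threshold `θ`,
audit budget `B`, penalty `c`.
-/

open Finset
open scoped Classical

noncomputable section

variable {X Z : Type*} [Fintype X] [Fintype Z] [Nonempty X] [Nonempty Z]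

/-- `h` is a probability mass function on `X × Z`. -/
def IsPmf (h : X × Z → ℝ) : Prop :=
  (∀ a, 0 ≤ h a) ∧ ∑ a : X × Z, h a = 1

/-- The `n`-agent profile obtained from the profile `am` of the agents other
than `i` by inserting `a` in slot `i` (denoted `A₋ᵢ ∪ᵢ {a}` in the paper). -/
def ins {n : ℕ} (i : Fin n) (am : {j : Fin n // j ≠ i} → X × Z) (a : X × Z) :
    Fin n → X × Z :=
  fun j => if hj : j = i then a else am ⟨j, hj⟩

/-- A report `a' = (x, z')` is suspicious: it has positive probability, scores at
or above the threshold, and some positive-probability type with the same `x`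
scores below the threshold. -/
def Suspicious (h f : X × Z → ℝ) (θ : ℝ) (a : X × Z) : Prop :=
  0 < h a ∧ θ ≤ f a ∧ ∃ z : Z, 0 < h (a.1, z) ∧ f (a.1, z) < θ

/-- `G A` is the set of indices of suspicious reports in the profile `A`. -/
def G {n : ℕ} (h f : X × Z → ℝ) (θ : ℝ) (A : Fin n → X × Z) : Finset (Fin n) :=
  univ.filter fun i => Suspicious h f θ (A i)

/-- An audit policy assigns to each profile a vector in `[0,1]^n` whose
suspicious coordinates sum to at most the budget `B`. -/
def IsAuditPolicy {n : ℕ} (h f : X × Z → ℝ) (θ B : ℝ)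
    (φ : (Fin n → X × Z) → Fin n → ℝ) : Prop :=
  ∀ A : Fin n → X × Z,
    (∀ i, φ A i ∈ Set.Icc (0 : ℝ) 1) ∧ ∑ i ∈ G h f θ A, φ A i ≤ B

/-- Expected gain of agent `i` with true type `a` reporting `a'` (when the others
report their true types, drawn i.i.d. from `h`), under audit policy `φ`. -/
def gain {n : ℕ} (h f : X × Z → ℝ) (θ c : ℝ)
    (φ : (Fin n → X × Z) → Fin n → ℝ) (i : Fin n) (a a' : X × Z) : ℝ :=
  if a' = a then 0
  else
    (∑ am : {j : Fin n // j ≠ i} → X × Z,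
        (∏ j, h (am j)) *
          ((if θ ≤ f a' then (1 : ℝ) else 0) * (1 - φ (ins i am a') i)
            - c * φ (ins i am a') i))
      - (if θ ≤ f a then (1 : ℝ) else 0)

/-- The incentive to lie under policy `φ`: the largest expected gain of any
misreport `a' = (x, z')` by any agent `i` with any true type `a = (x, z)` of
positive probability. -/
def eps {n : ℕ} (h f : X × Z → ℝ) (θ c : ℝ)
    (φ : (Fin n → X × Z) → Fin n → ℝ) : ℝ :=
  sSup {g : ℝ | ∃ (i : Fin n) (a : X × Z) (z' : Z),
    0 < h a ∧ g = gain h f θ c φ i a (a.1, z')}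

/-- The UNIFORM audit policy: audit each suspicious report with probability
`min 1 (B / |G(A)|)`, each sure-lie (`h (A i) = 0`) with probability `1`, and
everyone else with probability `0`. -/
def uniformPolicy {n : ℕ} (h f : X × Z → ℝ) (θ B : ℝ) :
    (Fin n → X × Z) → Fin n → ℝ :=
  fun A i =>
    if Suspicious h f θ (A i) then min 1 (B / ((G h f θ A).card : ℝ))
    else if h (A i) = 0 then 1 else 0

/-- Pairing `(a, A₋ᵢ)` with a slot-`i` insertion is a bijection onto profiles. -/
def insEquiv {n : ℕ} (i : Fin n) :
    (X × Z) × ({j : Fin n // j ≠ i} → X × Z) ≃ (Fin n → X × Z) where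
  toFun p := ins i p.2 p.1
  invFun A := (A i, fun j => A j)
  left_inv p := by
    refine Prod.ext (by simp [ins]) (funext fun j => ?_)
    simp [ins, j.2]
  right_inv A := by
    funext j
    by_cases hj : j = i <;> simp [ins, hj]

lemma ins_apply_self {n : ℕ} (i : Fin n) (A : Fin n → X × Z) :
    ins i (fun j : {j : Fin n // j ≠ i} => A j) (A i) = A := by
  funext j
  by_cases hj : j = i <;> simp [ins, hj]

lemma prod_ins_split {n : ℕ} (i : Fin n) (g : X × Z → ℝ) (A : Fin n → X × Z) :
    g (A i) * ∏ j : {j : Fin n // j ≠ i}, g (A j) = ∏ j, g (A j) := by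
  rw [Fintype.prod_eq_mul_prod_compl i (fun j => g (A j))]
  congr 1
  exact (Finset.prod_subtype _ (by simp) (fun j => g (A j))).symm

lemma slice_sum {n : ℕ} (h f : X × Z → ℝ) (θ : ℝ) (i : Fin n)
    (q : (Fin n → X × Z) → ℝ) :
    ∑ a' ∈ univ.filter (Suspicious h f θ),
        h a' * ∑ am : {j : Fin n // j ≠ i} → X × Z,
          (∏ j, h (am j)) * q (ins i am a')
      = ∑ A : Fin n → X × Z,
          (∏ j, h (A j)) * (if Suspicious h f θ (A i) then q A else 0) := by
  rw [Finset.sum_filter]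
  have hpt : ∀ p : (X × Z) × ({j : Fin n // j ≠ i} → X × Z),
      (if Suspicious h f θ p.1 then
        h p.1 * ((∏ j, h (p.2 j)) * q (ins i p.2 p.1)) else 0)
      = (fun A => (∏ j, h (A j)) * (if Suspicious h f θ (A i) then q A else 0))
          (insEquiv i p) := by
    rintro ⟨a, am⟩
    simp only [insEquiv, Equiv.coe_fn_mk]
    have h1 : ins i am a i = a := by simp [ins]
    have h2 : ∀ j : {j : Fin n // j ≠ i}, ins i am a j = am j := by
      intro j; simp [ins, j.2]
    have h3 : (∏ j, h (ins i am a j))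
        = h a * ∏ j : {j : Fin n // j ≠ i}, h (am j) := by
      rw [← prod_ins_split i h (ins i am a), h1]
      congr 1
      exact Finset.prod_congr rfl fun j _ => by rw [h2]
    simp only [h1, h3]
    by_cases hs : Suspicious h f θ a <;> simp [hs] <;> ring
  calc ∑ a' : X × Z, (if Suspicious h f θ a' then
          h a' * ∑ am : {j : Fin n // j ≠ i} → X × Z,
            (∏ j, h (am j)) * q (ins i am a') else 0)
      = ∑ a' : X × Z, ∑ am : {j : Fin n // j ≠ i} → X × Z,
          (if Suspicious h f θ a' then
            h a' * ((∏ j, h (am j)) * q (ins i am a')) else 0) := by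
        refine Finset.sum_congr rfl fun a' _ => ?_
        by_cases hs : Suspicious h f θ a' <;> simp [hs, Finset.mul_sum]
    _ = ∑ p : (X × Z) × ({j : Fin n // j ≠ i} → X × Z),
          (if Suspicious h f θ p.1 then
            h p.1 * ((∏ j, h (p.2 j)) * q (ins i p.2 p.1)) else 0) :=
        (Fintype.sum_prod_type
          (f := fun p : (X × Z) × ({j : Fin n // j ≠ i} → X × Z) =>
            if Suspicious h f θ p.1 then
              h p.1 * ((∏ j, h (p.2 j)) * q (ins i p.2 p.1)) else 0)).symm
    _ = ∑ A : Fin n → X × Z,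
          (∏ j, h (A j)) * (if Suspicious h f θ (A i) then q A else 0) :=
        Fintype.sum_equiv (insEquiv i) _ _ hpt

lemma key_sum {n : ℕ} (h f : X × Z → ℝ) (θ : ℝ)
    (q : (Fin n → X × Z) → Fin n → ℝ) :
    ∑ i : Fin n, ∑ a' ∈ univ.filter (Suspicious h f θ),
        h a' * ∑ am : {j : Fin n // j ≠ i} → X × Z,
          (∏ j, h (am j)) * q (ins i am a') i
      = ∑ A : Fin n → X × Z, (∏ j, h (A j)) * ∑ i ∈ G h f θ A, q A i := by
  have : ∀ i : Fin n, ∑ a' ∈ univ.filter (Suspicious h f θ),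
      h a' * ∑ am : {j : Fin n // j ≠ i} → X × Z,
        (∏ j, h (am j)) * q (ins i am a') i
      = ∑ A : Fin n → X × Z,
          (∏ j, h (A j)) * (if Suspicious h f θ (A i) then q A i else 0) :=
    fun i => slice_sum h f θ i (fun A => q A i)
  rw [Finset.sum_congr rfl fun i _ => this i, Finset.sum_comm]
  refine Finset.sum_congr rfl fun A _ => ?_
  rw [← Finset.mul_sum]
  congr 1
  rw [G, Finset.sum_filter]

/-- for every audit policy, the total probability-weighted expected
audit mass over suspicious reports is at most `E_{A ~ hⁿ}[min(B, |G(A)|)]`, with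
equality for the UNIFORM policy. -/
theorem total_expected_audit_le {n : ℕ}
    (h f : X × Z → ℝ) (θ B : ℝ) (hpmf : IsPmf h) (hB : 0 ≤ B) :
    (∀ φ : (Fin n → X × Z) → Fin n → ℝ, IsAuditPolicy h f θ B φ →
      ∑ i : Fin n, ∑ a' ∈ univ.filter (Suspicious h f θ),
          h a' * ∑ am : {j : Fin n // j ≠ i} → X × Z,
            (∏ j, h (am j)) * φ (ins i am a') i
        ≤ ∑ A : Fin n → X × Z,
            (∏ j, h (A j)) * min B ((G h f θ A).card : ℝ)) ∧
    (∑ i : Fin n, ∑ a' ∈ univ.filter (Suspicious h f θ),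
        h a' * ∑ am : {j : Fin n // j ≠ i} → X × Z,
          (∏ j, h (am j)) * uniformPolicy h f θ B (ins i am a') i
      = ∑ A : Fin n → X × Z,
          (∏ j, h (A j)) * min B ((G h f θ A).card : ℝ)) := by
  have hprod : ∀ A : Fin n → X × Z, 0 ≤ ∏ j, h (A j) :=
    fun A => Finset.prod_nonneg fun j _ => hpmf.1 _
  constructor
  · intro φ hφ
    rw [key_sum h f θ φ]
    refine Finset.sum_le_sum fun A _ => ?_
    refine mul_le_mul_of_nonneg_left ?_ (hprod A)
    refine le_min ((hφ A).2) ?_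
    calc ∑ i ∈ G h f θ A, φ A i ≤ ∑ i ∈ G h f θ A, 1 :=
          Finset.sum_le_sum fun i _ => ((hφ A).1 i).2
      _ = ((G h f θ A).card : ℝ) := by simp
  · rw [key_sum h f θ (uniformPolicy h f θ B)]
    refine Finset.sum_congr rfl fun A _ => ?_
    congr 1
    have hmem : ∀ i ∈ G h f θ A, uniformPolicy h f θ B A i
        = min 1 (B / ((G h f θ A).card : ℝ)) := by
      intro i hi
      have hs : Suspicious h f θ (A i) := (Finset.mem_filter.mp hi).2
      simp [uniformPolicy, hs]
    rw [Finset.sum_congr rfl hmem, Finset.sum_const, nsmul_eq_mul]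
    rcases Nat.eq_zero_or_pos (G h f θ A).card with hc | hc
    · rw [hc]
      simp [min_eq_right hB]
    · have hcpos : (0 : ℝ) < ((G h f θ A).card : ℝ) := by exact_mod_cast hc
      rw [mul_min_of_nonneg _ _ (le_of_lt hcpos), mul_one,
        mul_div_cancel₀ _ (ne_of_gt hcpos), min_comm]

end
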